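/- Let T be a binary phylogenetic X-tree and let f : X → {a,b} be a binary character. Then the parsimony score l(f,T) is equal to the maximum number of edge-disjoint A_f-B_f-paths in T. -/

import Mathlib

open SimpleGraph

/-- A binary phylogenetic `X`-tree: a finite tree whose leaves (vertices of degree
at most 1) are bijectively labeled by the taxa in `X` and all of whose internal
vertices have degree 3. -/
structure PhyloTree (X : Type*) where
  V : Type*
  fintypeV : Fintype V
  G : SimpleGraph V
  isTree : G.IsTree
  leaf : X → V
  leaf_inj : Function.Injective leaf
  leaf_iff : ∀ v : V, (G.neighborSet v).ncard ≤ 1 ↔ ∃ x, leaf x = v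
  binary : ∀ v : V, (G.neighborSet v).ncard = 1 ∨ (G.neighborSet v).ncard = 3

namespace PhyloTree

variable {X : Type*}

/-- The number of changing edges of an extension `g : V → Bool` on `T`. -/
noncomputable def changingNumber (T : PhyloTree X) (g : T.V → Bool) : ℕ :=
  {e ∈ T.G.edgeSet | ¬ (Sym2.map g e).IsDiag}.ncard

/-- The parsimony score `l(f,T)` of a binary character `f : X → Bool` on `T`:
the minimal number of changing edges over all extensions of `f` on `T`. -/
noncomputable def parsimony (T : PhyloTree X) (f : X → Bool) : ℕ :=
  sInf {n : ℕ | ∃ g : T.V → Bool, (∀ x : X, g (T.leaf x) = f x) ∧ T.changingNumber g = n}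

/-- `A_k(T)`: the set of binary characters with parsimony score `k` on `T`. -/
def Ak (T : PhyloTree X) (k : ℕ) : Set (X → Bool) :=
  {f | T.parsimony f = k}

/-- Leaf-label-preserving isomorphism of phylogenetic `X`-trees. -/
def Isomorphic (T T' : PhyloTree X) : Prop :=
  ∃ φ : T.G ≃g T'.G, ∀ x : X, φ (T.leaf x) = T'.leaf x

/-- The set of leaf vertices of `T`. -/
def leafSet (T : PhyloTree X) : Set T.V := Set.range T.leaf

/-- The set of taxa lying on the `u`-side of the edge `{u,v}` of `T`. -/
def side (T : PhyloTree X) (u v : T.V) : Set X :=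
  {x | (T.G.deleteEdges {s(u, v)}).Reachable (T.leaf x) u}

/-- The split sides of `T`: all taxon sets cut off by some edge of `T`. -/
def splits (T : PhyloTree X) : Set (Set X) :=
  {S | ∃ u v : T.V, T.G.Adj u v ∧ S = T.side u v}

/-- `[x,y]` is a cherry of `T`: two distinct leaves adjacent to the same vertex. -/
def IsCherry (T : PhyloTree X) (x y : X) : Prop :=
  x ≠ y ∧ ∃ u : T.V, T.G.Adj (T.leaf x) u ∧ T.G.Adj (T.leaf y) u

end PhyloTree

/-- `T'` is the result of a type-1 cherry reduction of the cherry `[x,y]` of `T`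
(delete leaf `x`, suppress the resulting degree-2 vertex), characterized via the
split systems (by Buneman's theorem this determines `T'` uniquely). -/
def IsRed1 {X : Type*} (T : PhyloTree X) (x y : X)
    (T' : PhyloTree {z : X // z ≠ x}) : Prop :=
  T.IsCherry x y ∧
  (fun S : Set {z : X // z ≠ x} => Subtype.val '' S) '' T'.splits =
    {S : Set X | ∃ S' ∈ T.splits, S = S' \ {x}} \ {∅, ({x} : Set X)ᶜ}

/-- `T'` is the result of a type-2 cherry reduction of the cherry `[x,y]` of `T`
(delete leaves `x` and `y` and their common neighbor, suppress the resulting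
degree-2 vertex), characterized via the split systems. -/
def IsRed2 {X : Type*} (T : PhyloTree X) (x y : X)
    (T' : PhyloTree {z : X // z ≠ x ∧ z ≠ y}) : Prop :=
  T.IsCherry x y ∧
  (fun S : Set {z : X // z ≠ x ∧ z ≠ y} => Subtype.val '' S) '' T'.splits =
    {S : Set X | ∃ S' ∈ T.splits, S = S' \ {x, y}} \ {∅, ({x, y} : Set X)ᶜ}

/-- `T'` is an NNI neighbor of `T`: there is an inner edge `{u,v}` of `T`, with
the four subtrees hanging off `u` (via `a₁`, `a₂`) and `v` (via `b₁`, `b₂`),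
such that `T'` arises by exchanging the subtree at `a₂` with the one at `b₂`;
characterized via split systems. -/
def IsNNINeighbor {X : Type*} (T T' : PhyloTree X) : Prop :=
  ∃ u v a₁ a₂ b₁ b₂ : T.V,
    T.G.Adj u v ∧ T.G.Adj u a₁ ∧ T.G.Adj u a₂ ∧ T.G.Adj v b₁ ∧ T.G.Adj v b₂ ∧
    a₁ ≠ a₂ ∧ a₁ ≠ v ∧ a₂ ≠ v ∧ b₁ ≠ b₂ ∧ b₁ ≠ u ∧ b₂ ≠ u ∧
    T'.splits = (T.splits \ {T.side u v, T.side v u}) ∪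
      {T.side a₁ u ∪ T.side b₂ v, T.side a₂ u ∪ T.side b₁ v}

/-- An `A`-`B`-path in a graph `G`: a path from a vertex of `A` to a vertex of `B`
none of whose interior vertices lies in `A` or `B`. -/
structure ABPath {V : Type*} (G : SimpleGraph V) (A B : Set V) where
  first : V
  last : V
  walk : G.Walk first last
  isPath : walk.IsPath
  first_mem : first ∈ A
  last_mem : last ∈ B
  interior_not_mem : ∀ v ∈ walk.support.tail.dropLast, v ∉ A ∧ v ∉ B

/-- `S` separates `A` from `B` in `G`: every `A`-`B`-path meets `S`. -/
def IsSeparator {V : Type*} (G : SimpleGraph V) (A B S : Set V) : Prop :=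
  ∀ P : ABPath G A B, ∃ v ∈ P.walk.support, v ∈ S

/-! ### Auxiliary development for statement 13 -/

namespace Stmt13

variable {V : Type*}

def chSet (G : SimpleGraph V) (g : V → Bool) : Set (Sym2 V) :=
  {e ∈ G.edgeSet | ¬ (Sym2.map g e).IsDiag}

def Pins (A B : Set V) (g : V → Bool) : Prop :=
  (∀ a ∈ A, g a = false) ∧ (∀ b ∈ B, g b = true)

noncomputable def kappa (G : SimpleGraph V) (A B : Set V) : ℕ :=
  sInf {n : ℕ | ∃ g : V → Bool, Pins A B g ∧ (chSet G g).ncard = n}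

def Sys (G : SimpleGraph V) (A B : Set V) (m : ℕ) : Prop :=
  ∃ P : Fin m → ABPath G A B,
    ∀ i j, i ≠ j → (P i).walk.edges.Disjoint ((P j).walk.edges)

lemma chSet_finite [Finite V] (G : SimpleGraph V) (g : V → Bool) : (chSet G g).Finite :=
  Set.toFinite _

lemma pins_exists {A B : Set V} (h : Disjoint A B) : ∃ g, Pins A B g := by
  classical
  refine ⟨fun v => if v ∈ B then true else false, fun a ha => ?_, fun b hb => ?_⟩
  · simp [Set.disjoint_left.mp h ha]
  · simp [hb]

lemma kappa_le [Finite V] {G : SimpleGraph V} {A B : Set V} {g : V → Bool}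
    (hg : Pins A B g) : kappa G A B ≤ (chSet G g).ncard :=
  Nat.sInf_le ⟨g, hg, rfl⟩

lemma kappa_spec [Finite V] (G : SimpleGraph V) (A B : Set V) (h : Disjoint A B) :
    ∃ g, Pins A B g ∧ (chSet G g).ncard = kappa G A B := by
  obtain ⟨g, hg⟩ := pins_exists h
  have : kappa G A B ∈ {n : ℕ | ∃ g : V → Bool, Pins A B g ∧ (chSet G g).ncard = n} :=
    Nat.sInf_mem ⟨_, g, hg, rfl⟩
  exact this

lemma exists_changing_edge {G : SimpleGraph V} (g : V → Bool) :
    ∀ {u v : V} (W : G.Walk u v), g u = false → g v = true →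
      ∃ e ∈ W.edges, ¬ (Sym2.map g e).IsDiag := by
  intro u v W
  induction W with
  | nil => intro h1 h2; rw [h1] at h2; exact absurd h2 (by simp)
  | @cons a b c h W ih =>
    intro h1 h2
    by_cases hgb : g b = false
    · obtain ⟨e, he, hch⟩ := ih hgb h2
      exact ⟨e, List.mem_cons_of_mem _ he, hch⟩
    · refine ⟨s(a, b), by simp, ?_⟩
      rw [Sym2.map_pair_eq, Sym2.mk_isDiag_iff, h1]
      exact fun hh => hgb hh.symm

lemma sys_le_chSet [Finite V] {G : SimpleGraph V} {A B : Set V} {g : V → Bool}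
    (hg : Pins A B g) {m : ℕ} (P : Fin m → ABPath G A B)
    (hP : ∀ i j, i ≠ j → (P i).walk.edges.Disjoint ((P j).walk.edges)) :
    m ≤ (chSet G g).ncard := by
  have hch : ∀ i, ∃ e ∈ (P i).walk.edges, ¬ (Sym2.map g e).IsDiag := fun i =>
    exists_changing_edge g (P i).walk (hg.1 _ (P i).first_mem) (hg.2 _ (P i).last_mem)
  choose e he hchg using hch
  have hinj : Function.Injective fun i =>
      (⟨e i, (P i).walk.edges_subset_edgeSet (he i), hchg i⟩ : chSet G g) := by
    intro i j hij
    by_contra hne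
    have heq : e i = e j := congrArg Subtype.val hij
    exact hP i j hne (he i) (heq ▸ he j)
  calc m = Nat.card (Fin m) := by simp
    _ ≤ Nat.card (chSet G g) := Nat.card_le_card_of_injective _ hinj
    _ = (chSet G g).ncard := (Set.ncard_def _).symm

lemma sys_le_kappa [Finite V] {G : SimpleGraph V} {A B : Set V} (hdis : Disjoint A B)
    {m : ℕ} (hm : Sys G A B m) : m ≤ kappa G A B := by
  obtain ⟨g, hg, hgk⟩ := kappa_spec G A B hdis
  obtain ⟨P, hP⟩ := hm
  exact hgk ▸ sys_le_chSet hg P hP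

lemma chSet_split [Finite V] (G : SimpleGraph V) (S : Set (Sym2 V)) (g : V → Bool) :
    (chSet G g).ncard
      = (chSet (G.deleteEdges S) g).ncard
        + {e ∈ G.edgeSet ∩ S | ¬ (Sym2.map g e).IsDiag}.ncard := by
  rw [← Set.ncard_union_eq ?hd (Set.toFinite _) (Set.toFinite _)]
  · congr 1
    ext e
    simp only [chSet, Set.mem_setOf_eq, Set.mem_union, edgeSet_deleteEdges, Set.mem_diff,
      Set.mem_inter_iff, Set.mem_sep_iff]
    tauto
  case hd =>
    rw [Set.disjoint_left]
    rintro e ⟨he, -⟩ ⟨he2, -⟩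
    rw [edgeSet_deleteEdges] at he
    exact he.2 he2.2

lemma chSet_congr {G : SimpleGraph V} {g g' : V → Bool}
    (h : ∀ a b, G.Adj a b → g a = g' a) :
    chSet G g = chSet G g' := by
  ext e
  induction e with
  | _ a b =>
    simp only [chSet, Set.mem_setOf_eq, and_congr_right_iff]
    intro he
    rw [mem_edgeSet] at he
    rw [Sym2.map_pair_eq, Sym2.map_pair_eq, h a b he, h b a he.symm]

lemma not_mem_support_of_isolated {G : SimpleGraph V} {x : V} (hx : ∀ a, ¬ G.Adj x a) :
    ∀ {c d : V} (W : G.Walk c d), x ≠ c → x ∉ W.support := by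
  intro c d W
  induction W with
  | nil => intro h; simp [h]
  | @cons a b c' h W ih =>
    intro hxa
    simp only [Walk.support_cons, List.mem_cons]
    rintro (rfl | hmem)
    · exact hxa rfl
    · refine ih (fun hxb => ?_) hmem
      subst hxb
      exact hx a h.symm

lemma not_mem_support_of_adj {G : SimpleGraph V} (hac : G.IsAcyclic) {x u s z : V}
    (hxu : G.Adj x u) (W : G.Walk u z) (hp : (Walk.cons hxu W).IsPath)
    (hxs : G.Adj x s) (hsu : s ≠ u) : s ∉ (Walk.cons hxu W).support := by
  classical
  intro hmem
  set M : G.Walk x z := Walk.cons hxu W with hM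
  have hP : (M.takeUntil s hmem).IsPath := hp.takeUntil hmem
  have hQ : (Walk.cons hxs Walk.nil : G.Walk x s).IsPath := by simp [hxs.ne]
  have huniq := isAcyclic_iff_path_unique.mp hac ⟨M.takeUntil s hmem, hP⟩
    ⟨Walk.cons hxs Walk.nil, hQ⟩
  have hwalk : M.takeUntil s hmem = Walk.cons hxs Walk.nil := congrArg Subtype.val huniq
  have hedges : (M.takeUntil s hmem).edges = [s(x, s)] := by rw [hwalk]; simp
  have hspec := M.take_spec hmem
  have happ : (M.takeUntil s hmem).edges ++ (M.dropUntil s hmem).edges = s(x, u) :: W.edges := by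
    rw [← Walk.edges_append, hspec]; simp [hM]
  rw [hedges] at happ
  have hhd : s(x, s) = s(x, u) := by
    simpa using congrArg (fun l => l.head?) happ
  rcases Sym2.eq_iff.mp hhd with ⟨-, h2⟩ | ⟨h1, h2⟩
  · exact hsu h2
  · exact G.loopless.irrefl u (h1 ▸ hxu)

lemma sys_zero (G : SimpleGraph V) (A B : Set V) : Sys G A B 0 :=
  ⟨fun i => i.elim0, fun i => i.elim0⟩

lemma sys_anti {G : SimpleGraph V} {A B : Set V} {m k : ℕ} (h : k ≤ m) :
    Sys G A B m → Sys G A B k := by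
  rintro ⟨P, hP⟩
  refine ⟨fun i => P (Fin.castLE h i), fun i j hij => hP _ _ ?_⟩
  intro hc
  exact hij (Fin.castLE_injective h hc)

lemma tail_dropLast (l : List V) : l.tail.dropLast = l.dropLast.tail := by
  cases l with
  | nil => rfl
  | cons a l =>
    cases l with
    | nil => rfl
    | cons b l => simp [List.dropLast_cons_of_ne_nil]

lemma sys_rev {G : SimpleGraph V} {A B : Set V} {m : ℕ} (h : Sys G A B m) : Sys G B A m := by
  obtain ⟨P, hP⟩ := h
  refine ⟨fun i => ⟨(P i).last, (P i).first, (P i).walk.reverse, (P i).isPath.reverse,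
    (P i).last_mem, (P i).first_mem, ?_⟩, ?_⟩
  · intro v hv
    have hmem : v ∈ (P i).walk.support.tail.dropLast := by
      rw [Walk.support_reverse, List.tail_reverse, List.dropLast_reverse,
        List.mem_reverse, ← tail_dropLast] at hv
      exact hv
    exact ⟨((P i).interior_not_mem v hmem).2, ((P i).interior_not_mem v hmem).1⟩
  · intro i j hij e he he2
    rw [Walk.edges_reverse, List.mem_reverse] at he he2
    exact hP i j hij he he2

end Stmt13
namespace Stmt13

variable {V : Type*}

lemma kappa_comm (G : SimpleGraph V) (A B : Set V) : kappa G A B = kappa G B A := by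
  have key : ∀ (A B : Set V) (n : ℕ),
      (∃ g : V → Bool, Pins A B g ∧ (chSet G g).ncard = n) →
      (∃ g : V → Bool, Pins B A g ∧ (chSet G g).ncard = n) := by
    rintro A B n ⟨g, ⟨hgA, hgB⟩, hcn⟩
    refine ⟨fun v => !(g v), ⟨fun b hb => by simp [hgB b hb], fun a ha => by simp [hgA a ha]⟩, ?_⟩
    rw [← hcn]
    congr 1
    ext e
    induction e with
    | _ a b =>
      simp only [chSet, Set.mem_setOf_eq, and_congr_right_iff]
      intro
      rw [Sym2.map_pair_eq, Sym2.map_pair_eq, Sym2.mk_isDiag_iff, Sym2.mk_isDiag_iff]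
      simp
  unfold kappa
  congr 1
  ext n
  exact ⟨key A B n, key B A n⟩

lemma kappa_zero_of_separated [Finite V] {G : SimpleGraph V} {A B : Set V}
    (h : ∀ a ∈ A, ∀ b ∈ B, ¬ G.Reachable a b) : kappa G A B = 0 := by
  classical
  have : kappa G A B ≤ 0 := by
    refine le_trans (kappa_le (g := fun v => if ∃ b ∈ B, G.Reachable v b then true else false)
      ⟨fun a ha => ?_, fun b hb => ?_⟩) ?_
    · simp only [ite_eq_right_iff]
      rintro ⟨b, hb, hr⟩
      exact absurd hr (h a ha b hb)
    · simp only [if_pos (⟨b, hb, Reachable.refl b⟩ : ∃ b' ∈ B, G.Reachable b b')]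
    · have : chSet G (fun v => if ∃ b ∈ B, G.Reachable v b then true else false) = ∅ := by
        ext e
        induction e with
        | _ a c =>
          simp only [chSet, Set.mem_setOf_eq, Set.mem_empty_iff_false, iff_false, not_and,
            not_not]
          intro he
          rw [mem_edgeSet] at he
          rw [Sym2.map_pair_eq, Sym2.mk_isDiag_iff]
          have : (∃ b ∈ B, G.Reachable a b) ↔ (∃ b ∈ B, G.Reachable c b) := by
            constructor
            · rintro ⟨b, hb, hr⟩; exact ⟨b, hb, he.symm.reachable.trans hr⟩
            · rintro ⟨b, hb, hr⟩; exact ⟨b, hb, he.reachable.trans hr⟩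
          simp [this]
      rw [this, Set.ncard_empty]
  omega

lemma kappa_le_of_extend [Finite V] {G G' : SimpleGraph V} {A B A' B' : Set V} {c : ℕ}
    (hdis' : Disjoint A' B')
    (h : ∀ g', Pins A' B' g' → ∃ g, Pins A B g ∧ (chSet G g).ncard ≤ (chSet G' g').ncard + c) :
    kappa G A B ≤ kappa G' A' B' + c := by
  obtain ⟨g', hg', hcn⟩ := kappa_spec G' A' B' hdis'
  obtain ⟨g, hg, hle⟩ := h g' hg'
  have := kappa_le (G := G) hg
  omega

end Stmt13
namespace Stmt13

variable {V : Type*}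

lemma interior_mem_support {G' : SimpleGraph V} {c d : V} {W : G'.Walk c d} {v : V}
    (hv : v ∈ W.support.tail.dropLast) : v ∈ W.support :=
  List.tail_subset _ (List.dropLast_subset _ hv)

lemma interior_ne_first {G' : SimpleGraph V} {c d : V} {W : G'.Walk c d} (hW : W.IsPath)
    {v : V} (hv : v ∈ W.support.tail.dropLast) : v ≠ c := by
  intro hvc
  have hnd := hW.support_nodup
  rw [W.support_eq_cons] at hnd
  exact (List.nodup_cons.mp hnd).1 (List.dropLast_subset _ (hvc ▸ hv))

lemma lift_one {G G' : SimpleGraph V} {A B A' B' : Set V}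
    (hE : G'.edgeSet ⊆ G.edgeSet)
    (hAiso : ∀ v ∈ A, v ∉ A' → ∀ a, ¬ G'.Adj v a)
    (hBiso : ∀ v ∈ B, v ∉ B' → ∀ a, ¬ G'.Adj v a)
    (P : ABPath G' A' B') (hf : P.first ∈ A) (hl : P.last ∈ B) :
    ∃ Q : ABPath G A B, Q.walk.edges = P.walk.edges := by
  have hsub : ∀ e ∈ P.walk.edges, e ∈ G.edgeSet := fun e he =>
    hE (P.walk.edges_subset_edgeSet he)
  refine ⟨⟨P.first, P.last, P.walk.transfer G hsub, P.isPath.transfer hsub, hf, hl, ?_⟩,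
    Walk.edges_transfer _ hsub⟩
  intro v hv
  rw [Walk.support_transfer] at hv
  have hint := P.interior_not_mem v hv
  have hvs : v ∈ P.walk.support := interior_mem_support hv
  have hvne : v ≠ P.first := interior_ne_first P.isPath hv
  constructor
  · intro hvA
    by_cases hvA' : v ∈ A'
    · exact hint.1 hvA'
    · exact not_mem_support_of_isolated (hAiso v hvA hvA') P.walk hvne hvs
  · intro hvB
    by_cases hvB' : v ∈ B'
    · exact hint.2 hvB'
    · exact not_mem_support_of_isolated (hBiso v hvB hvB') P.walk hvne hvs

lemma prepend_one {G G' : SimpleGraph V} {A B A' B' : Set V} {x u : V}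
    (hE : G'.edgeSet ⊆ G.edgeSet)
    (hxu : G.Adj x u)
    (hxA : x ∈ A) (huA : u ∉ A) (huB : u ∉ B)
    (hxiso : ∀ a, ¬ G'.Adj x a)
    (hAiso : ∀ v ∈ A, v ∉ A' → ∀ a, ¬ G'.Adj v a)
    (hBiso : ∀ v ∈ B, v ∉ B' → ∀ a, ¬ G'.Adj v a)
    (P : ABPath G' A' B') (hfirst : P.first = u) (hl : P.last ∈ B) :
    ∃ Q : ABPath G A B, Q.walk.edges = s(x, u) :: P.walk.edges := by
  have hsub : ∀ e ∈ (P.walk.copy hfirst rfl).edges, e ∈ G.edgeSet := by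
    rw [Walk.edges_copy]
    exact fun e he => hE (P.walk.edges_subset_edgeSet he)
  set W1 : G.Walk u P.last := (P.walk.copy hfirst rfl).transfer G hsub with hW1
  have hW1sup : W1.support = P.walk.support := by
    rw [hW1, Walk.support_transfer, Walk.support_copy]
  have hW1path : W1.IsPath := by
    refine Walk.IsPath.transfer _ ?_
    rw [Walk.isPath_copy]
    exact P.isPath
  have hxsup : x ∉ W1.support := by
    rw [hW1sup]
    refine not_mem_support_of_isolated hxiso P.walk ?_
    rw [hfirst]; exact hxu.ne
  have htne : P.walk.support.tail ≠ [] := by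
    intro h0
    have hend := P.walk.end_mem_support
    rw [P.walk.support_eq_cons, h0, List.mem_singleton] at hend
    rw [hend, hfirst] at hl
    exact huB hl
  refine ⟨⟨x, P.last, Walk.cons hxu W1, ?_, hxA, hl, ?_⟩, ?_⟩
  · rw [Walk.cons_isPath_iff]
    exact ⟨hW1path, hxsup⟩
  · intro v hv
    rw [Walk.support_cons, List.tail_cons, hW1sup, P.walk.support_eq_cons,
      List.dropLast_cons_of_ne_nil htne, List.mem_cons] at hv
    rcases hv with rfl | hv
    · rw [hfirst]; exact ⟨huA, huB⟩
    · have hint := P.interior_not_mem v hv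
      have hvs : v ∈ P.walk.support := interior_mem_support hv
      have hvne : v ≠ P.first := interior_ne_first P.isPath hv
      constructor
      · intro hvA
        by_cases hvA' : v ∈ A'
        · exact hint.1 hvA'
        · exact not_mem_support_of_isolated (hAiso v hvA hvA') P.walk hvne hvs
      · intro hvB
        by_cases hvB' : v ∈ B'
        · exact hint.2 hvB'
        · exact not_mem_support_of_isolated (hBiso v hvB hvB') P.walk hvne hvs
  · show (Walk.cons hxu W1).edges = _
    rw [Walk.edges_cons, hW1, Walk.edges_transfer, Walk.edges_copy]

lemma sys_cons {G : SimpleGraph V} {A B : Set V} {m : ℕ} (N : ABPath G A B)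
    (P : Fin m → ABPath G A B)
    (hP : ∀ i j, i ≠ j → (P i).walk.edges.Disjoint ((P j).walk.edges))
    (hN : ∀ i, N.walk.edges.Disjoint ((P i).walk.edges)) :
    Sys G A B (m + 1) := by
  refine ⟨Fin.cases N P, fun i j hij => ?_⟩
  induction i using Fin.cases with
  | zero =>
    induction j using Fin.cases with
    | zero => exact absurd rfl hij
    | succ j => simpa using hN j
  | succ i =>
    induction j using Fin.cases with
    | zero => simpa using (hN i).symm
    | succ j =>
      have : i ≠ j := fun h => hij (by rw [h])
      simpa using hP i j this

end Stmt13
namespace Stmt13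

variable {V : Type*}

lemma exists_first_edge {G' : SimpleGraph V} {A' B' : Set V} (P : ABPath G' A' B')
    (hne : P.first ≠ P.last) :
    ∃ w, G'.Adj P.first w ∧ s(P.first, w) ∈ P.walk.edges := by
  obtain ⟨w, hadj, p', hp⟩ := Walk.exists_eq_cons_of_ne hne P.walk
  exact ⟨w, hadj, by rw [hp]; simp⟩

lemma sys_plain' {G G' : SimpleGraph V} {A B A' B' : Set V} {m : ℕ}
    (hE : G'.edgeSet ⊆ G.edgeSet)
    (hA'A : A' ⊆ A) (hB'B : B' ⊆ B)
    (hAiso : ∀ v ∈ A, v ∉ A' → ∀ a, ¬ G'.Adj v a)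
    (hBiso : ∀ v ∈ B, v ∉ B' → ∀ a, ¬ G'.Adj v a) :
    Sys G' A' B' m → ∃ Q : Fin m → ABPath G A B,
      (∀ i j, i ≠ j → (Q i).walk.edges.Disjoint ((Q j).walk.edges)) ∧
      ∀ i, ∀ e ∈ (Q i).walk.edges, e ∈ G'.edgeSet := by
  rintro ⟨P, hP⟩
  have h : ∀ i, ∃ Q : ABPath G A B, Q.walk.edges = (P i).walk.edges := fun i =>
    lift_one hE hAiso hBiso (P i) (hA'A (P i).first_mem) (hB'B (P i).last_mem)
  choose Q hQ using h
  refine ⟨Q, fun i j hij => by rw [hQ i, hQ j]; exact hP i j hij, fun i e he => ?_⟩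
  rw [hQ i] at he
  exact (P i).walk.edges_subset_edgeSet he

lemma sys_plain {G G' : SimpleGraph V} {A B A' B' : Set V} {m : ℕ}
    (hE : G'.edgeSet ⊆ G.edgeSet)
    (hA'A : A' ⊆ A) (hB'B : B' ⊆ B)
    (hAiso : ∀ v ∈ A, v ∉ A' → ∀ a, ¬ G'.Adj v a)
    (hBiso : ∀ v ∈ B, v ∉ B' → ∀ a, ¬ G'.Adj v a) :
    Sys G' A' B' m → Sys G A B m := fun h => by
  obtain ⟨Q, hQ, -⟩ := sys_plain' hE hA'A hB'B hAiso hBiso h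
  exact ⟨Q, hQ⟩

lemma sys_prepend {G G' : SimpleGraph V} {A B A' : Set V} {x u : V} {m : ℕ}
    (hE : G'.edgeSet ⊆ G.edgeSet)
    (hxu : G.Adj x u) (hfresh : s(x, u) ∉ G'.edgeSet)
    (hxA : x ∈ A) (huA : u ∉ A) (huB : u ∉ B)
    (hxiso : ∀ a, ¬ G'.Adj x a)
    (hA'sub : ∀ v ∈ A', v ≠ u → v ∈ A)
    (hAiso : ∀ v ∈ A, v ∉ A' → ∀ a, ¬ G'.Adj v a)
    (hudeg : ∀ a b, G'.Adj u a → G'.Adj u b → a = b) :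
    Sys G' A' B m → Sys G A B m := by
  classical
  rintro ⟨P, hP⟩
  have hBiso : ∀ v ∈ B, v ∉ B → ∀ a, ¬ G'.Adj v a := fun v hv hv' => absurd hv hv'
  have hlift : ∀ i, ∃ Q : ABPath G A B,
      Q.walk.edges = (if (P i).first = u then [s(x, u)] else []) ++ (P i).walk.edges := by
    intro i
    by_cases h : (P i).first = u
    · obtain ⟨Q, hQ⟩ := prepend_one hE hxu hxA huA huB hxiso hAiso hBiso (P i) h (P i).last_mem
      exact ⟨Q, by rw [hQ, if_pos h]; rfl⟩
    · obtain ⟨Q, hQ⟩ := lift_one hE hAiso hBiso (P i)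
        (hA'sub _ (P i).first_mem h) (P i).last_mem
      exact ⟨Q, by rw [hQ, if_neg h]; rfl⟩
  choose Q hQ using hlift
  have huniq : ∀ i j, (P i).first = u → (P j).first = u → i ≠ j → False := by
    intro i j hi hj hij
    have hnei : (P i).first ≠ (P i).last := by
      rw [hi]; intro hh; exact huB (hh ▸ (P i).last_mem)
    have hnej : (P j).first ≠ (P j).last := by
      rw [hj]; intro hh; exact huB (hh ▸ (P j).last_mem)
    obtain ⟨wi, hadji, hmemi⟩ := exists_first_edge (P i) hnei
    obtain ⟨wj, hadjj, hmemj⟩ := exists_first_edge (P j) hnej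
    have hadji' : G'.Adj u wi := by rw [← hi]; exact hadji
    have hadjj' : G'.Adj u wj := by rw [← hj]; exact hadjj
    have hw : wi = wj := hudeg _ _ hadji' hadjj'
    have hmemi' : s(u, wi) ∈ (P i).walk.edges := by rw [← hi]; exact hmemi
    have hmemj' : s(u, wi) ∈ (P j).walk.edges := by rw [hw, ← hj]; exact hmemj
    exact hP i j hij hmemi' hmemj'
  refine ⟨Q, fun i j hij => ?_⟩
  rw [hQ i, hQ j]
  intro e hei hej
  rcases List.mem_append.mp hei with hei' | hei'
  · rcases List.mem_append.mp hej with hej' | hej'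
    · by_cases hi : (P i).first = u
      · by_cases hj : (P j).first = u
        · exact huniq i j hi hj hij
        · rw [if_neg hj] at hej'; exact absurd hej' List.not_mem_nil
      · rw [if_neg hi] at hei'; exact absurd hei' List.not_mem_nil
    · by_cases hi : (P i).first = u
      · rw [if_pos hi, List.mem_singleton] at hei'
        exact hfresh (hei' ▸ (P j).walk.edges_subset_edgeSet hej')
      · rw [if_neg hi] at hei'; exact absurd hei' List.not_mem_nil
  · rcases List.mem_append.mp hej with hej' | hej'
    · by_cases hj : (P j).first = u
      · rw [if_pos hj, List.mem_singleton] at hej'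
        exact hfresh (hej' ▸ (P i).walk.edges_subset_edgeSet hei')
      · rw [if_neg hj] at hej'; exact absurd hej' List.not_mem_nil
    · exact hP i j hij hei' hej'

end Stmt13
namespace Stmt13

variable {V : Type*}

lemma acyclic_del {G : SimpleGraph V} (hac : G.IsAcyclic) (S : Set (Sym2 V)) :
    (G.deleteEdges S).IsAcyclic := by
  intro v c hc
  exact hac _ (hc.transfer fun e he =>
    ((edgeSet_deleteEdges S ▸ c.edges_subset_edgeSet he) : _ ∈ G.edgeSet \ S).1)

lemma edgeSet_del_subset (G : SimpleGraph V) (S : Set (Sym2 V)) :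
    (G.deleteEdges S).edgeSet ⊆ G.edgeSet := by
  rw [edgeSet_deleteEdges]; exact Set.diff_subset

lemma nbhd_del_subset (G : SimpleGraph V) (S : Set (Sym2 V)) (v : V) :
    (G.deleteEdges S).neighborSet v ⊆ G.neighborSet v := fun w hw => by
  rw [mem_neighborSet] at hw ⊢
  exact hw.1

lemma nbhd_del_ncard [Finite V] (G : SimpleGraph V) (S : Set (Sym2 V)) (v : V) :
    ((G.deleteEdges S).neighborSet v).ncard ≤ (G.neighborSet v).ncard :=
  Set.ncard_le_ncard (nbhd_del_subset G S v) (Set.toFinite _)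

lemma card_del_le [Finite V] {G : SimpleGraph V} {S : Set (Sym2 V)} {e : Sym2 V}
    (heS : e ∈ S) (heG : e ∈ G.edgeSet) {n : ℕ} (hcard : G.edgeSet.ncard ≤ n + 1) :
    (G.deleteEdges S).edgeSet.ncard ≤ n := by
  have hlt : (G.deleteEdges S).edgeSet.ncard < G.edgeSet.ncard := by
    refine Set.ncard_lt_ncard ?_ (Set.toFinite _)
    rw [edgeSet_deleteEdges]
    exact ⟨Set.diff_subset, fun hsub => (hsub heG).2 heS⟩
  omega

/-- the inductive hypothesis -/
def IndHyp (V : Type*) (n : ℕ) : Prop :=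
  ∀ (G' : SimpleGraph V) (A' B' : Set V), G'.edgeSet.ncard ≤ n → G'.IsAcyclic →
    (∀ v, (G'.neighborSet v).ncard ≤ 3) → Disjoint A' B' →
    (∀ v ∈ A' ∪ B', (G'.neighborSet v).ncard ≤ 1) → Sys G' A' B' (kappa G' A' B')

lemma leaf_isolated {G : SimpleGraph V} {x u : V} (hxleaf : ∀ r, G.Adj x r → r = u)
    {S : Set (Sym2 V)} (hS : s(x, u) ∈ S) : ∀ a, ¬ (G.deleteEdges S).Adj x a := by
  intro a h
  rw [deleteEdges_adj] at h
  obtain ⟨hadj, hne⟩ := h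
  exact hne ((hxleaf a hadj) ▸ hS)

lemma extra_zero_of_diag [Finite V] {G : SimpleGraph V} {S : Set (Sym2 V)} {g : V → Bool}
    (h : ∀ e ∈ S, (Sym2.map g e).IsDiag) :
    {e ∈ G.edgeSet ∩ S | ¬ (Sym2.map g e).IsDiag}.ncard = 0 := by
  rw [Set.ncard_eq_zero (Set.toFinite _), Set.eq_empty_iff_forall_notMem]
  rintro e ⟨⟨-, heS⟩, hch⟩
  exact hch (h e heS)

lemma extra_le_one [Finite V] {G : SimpleGraph V} {S : Set (Sym2 V)} {g : V → Bool} {e0 : Sym2 V}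
    (h : ∀ e ∈ S, ¬ (Sym2.map g e).IsDiag → e = e0) :
    {e ∈ G.edgeSet ∩ S | ¬ (Sym2.map g e).IsDiag}.ncard ≤ 1 := by
  refine le_trans (Set.ncard_le_ncard ?_ (Set.toFinite {e0})) ?_
  · rintro e ⟨⟨-, heS⟩, hch⟩
    exact h e heS hch
  · simp

end Stmt13
namespace Stmt13

variable {V : Type*} [Finite V]

lemma reduce_unpinned {G : SimpleGraph V} {A B : Set V} {n : ℕ} (IH : IndHyp V n)
    (hcard : G.edgeSet.ncard ≤ n + 1) (hac : G.IsAcyclic)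
    (hdeg3 : ∀ v, (G.neighborSet v).ncard ≤ 3) (hdis : Disjoint A B)
    (hpin : ∀ v ∈ A ∪ B, (G.neighborSet v).ncard ≤ 1)
    {x u : V} (hxu : G.Adj x u) (hxleaf : ∀ r, G.Adj x r → r = u) (hxAB : x ∉ A ∪ B) :
    Sys G A B (kappa G A B) := by
  classical
  set S : Set (Sym2 V) := {s(x, u)} with hS
  have hSmem : s(x, u) ∈ S := by rw [hS]; exact rfl
  have hxiso := leaf_isolated hxleaf hSmem
  have hxA : x ∉ A := fun h => hxAB (Or.inl h)
  have hxB : x ∉ B := fun h => hxAB (Or.inr h)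
  have hkle : kappa G A B ≤ kappa (G.deleteEdges S) A B := by
    have := kappa_le_of_extend (G := G) (G' := G.deleteEdges S) (A := A) (B := B) (A' := A) (B' := B) (c := 0) hdis ?_
    · omega
    rintro g' ⟨hg'A, hg'B⟩
    refine ⟨fun v => if v = x then g' u else g' v, ⟨?_, ?_⟩, ?_⟩
    · intro a ha
      show (if a = x then g' u else g' a) = false
      rw [if_neg (fun h : a = x => hxA (h ▸ ha))]
      exact hg'A a ha
    · intro b hb
      show (if b = x then g' u else g' b) = true
      rw [if_neg (fun h : b = x => hxB (h ▸ hb))]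
      exact hg'B b hb
    · rw [chSet_split G S]
      have hcongr : chSet (G.deleteEdges S) (fun v => if v = x then g' u else g' v)
          = chSet (G.deleteEdges S) g' := by
        refine chSet_congr fun a b hab => ?_
        show (if a = x then g' u else g' a) = g' a
        rw [if_neg (fun h : a = x => hxiso b (by rw [← h]; exact hab))]
      have hextra : {e ∈ G.edgeSet ∩ S | ¬ (Sym2.map
          (fun v => if v = x then g' u else g' v) e).IsDiag}.ncard = 0 := by
        refine extra_zero_of_diag fun e he => ?_
        rw [hS, Set.mem_singleton_iff] at he
        subst he
        rw [Sym2.map_pair_eq, Sym2.mk_isDiag_iff]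
        simp [hxu.ne']
      rw [hcongr, hextra]
  have hsys' : Sys (G.deleteEdges S) A B (kappa (G.deleteEdges S) A B) :=
    IH _ A B (card_del_le hSmem ((mem_edgeSet G).mpr hxu) hcard) (acyclic_del hac S)
      (fun v => le_trans (nbhd_del_ncard G S v) (hdeg3 v)) hdis
      (fun v hv => le_trans (nbhd_del_ncard G S v) (hpin v hv))
  refine sys_anti hkle (sys_plain (edgeSet_del_subset G S) subset_rfl subset_rfl ?_ ?_ hsys')
  · intro v hv hv'; exact absurd hv hv'
  · intro v hv hv'; exact absurd hv hv'

end Stmt13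
namespace Stmt13

variable {V : Type*} [Finite V]

lemma reduce_R7 {G : SimpleGraph V} {A B : Set V} {n : ℕ} (IH : IndHyp V n)
    (hcard : G.edgeSet.ncard ≤ n + 1) (hac : G.IsAcyclic)
    (hdeg3 : ∀ v, (G.neighborSet v).ncard ≤ 3) (hdis : Disjoint A B)
    (hpin : ∀ v ∈ A ∪ B, (G.neighborSet v).ncard ≤ 1)
    {x u : V} (hxu : G.Adj x u) (hxleaf : ∀ r, G.Adj x r → r = u)
    (huleaf : ∀ r, G.Adj u r → r = x) (hxA : x ∈ A) (huB : u ∉ B) :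
    Sys G A B (kappa G A B) := by
  classical
  set S : Set (Sym2 V) := {s(x, u)} with hS
  have hSmem : s(x, u) ∈ S := rfl
  have hSmem' : s(u, x) ∈ S := by rw [hS, Set.mem_singleton_iff]; exact Sym2.eq_swap
  have hxiso := leaf_isolated hxleaf hSmem
  have huiso := leaf_isolated huleaf hSmem'
  have hdis' : Disjoint (A \ {x}) B := Set.disjoint_of_subset_left Set.diff_subset hdis
  have hkle : kappa G A B ≤ kappa (G.deleteEdges S) (A \ {x}) B := by
    have := kappa_le_of_extend (G := G) (G' := G.deleteEdges S)
      (A := A) (B := B) (A' := A \ {x}) (B' := B) (c := 0) hdis' ?_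
    · omega
    rintro g' ⟨hg'A, hg'B⟩
    refine ⟨fun v => if v = x ∨ v = u then false else g' v, ⟨?_, ?_⟩, ?_⟩
    · intro a ha
      show (if a = x ∨ a = u then false else g' a) = false
      by_cases h : a = x ∨ a = u
      · rw [if_pos h]
      · rw [if_neg h]
        exact hg'A a ⟨ha, fun hh => h (Or.inl hh)⟩
    · intro b hb
      show (if b = x ∨ b = u then false else g' b) = true
      rw [if_neg ?_]
      · exact hg'B b hb
      rintro (rfl | rfl)
      · exact Set.disjoint_left.mp hdis hxA hb
      · exact huB hb
    · rw [chSet_split G S]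
      have hcongr : chSet (G.deleteEdges S) (fun v => if v = x ∨ v = u then false else g' v)
          = chSet (G.deleteEdges S) g' := by
        refine chSet_congr fun a b hab => ?_
        show (if a = x ∨ a = u then false else g' a) = g' a
        rw [if_neg ?_]
        rintro (rfl | rfl)
        · exact hxiso b hab
        · exact huiso b hab
      have hextra := extra_zero_of_diag
        (G := G) (S := S) (g := fun v => if v = x ∨ v = u then false else g' v) ?_
      · rw [hcongr, hextra]
      intro e he
      rw [hS, Set.mem_singleton_iff] at he
      subst he
      rw [Sym2.map_pair_eq, Sym2.mk_isDiag_iff]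
      simp
  have hsys' := IH _ (A \ {x}) B (card_del_le hSmem ((mem_edgeSet G).mpr hxu) hcard)
    (acyclic_del hac S) (fun v => le_trans (nbhd_del_ncard G S v) (hdeg3 v)) hdis'
    (fun v hv => le_trans (nbhd_del_ncard G S v) (hpin v (by
      rcases hv with hv | hv
      · exact Or.inl hv.1
      · exact Or.inr hv)))
  refine sys_anti hkle (sys_plain (edgeSet_del_subset G S) Set.diff_subset subset_rfl ?_ ?_ hsys')
  · intro v hv hv' a
    have : v = x := by
      by_contra hne
      exact hv' ⟨hv, hne⟩
    exact this ▸ hxiso a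
  · intro v hv hv'; exact absurd hv hv'

lemma reduce_R1 {G : SimpleGraph V} {A B : Set V} {n : ℕ} (IH : IndHyp V n)
    (hcard : G.edgeSet.ncard ≤ n + 1) (hac : G.IsAcyclic)
    (hdeg3 : ∀ v, (G.neighborSet v).ncard ≤ 3) (hdis : Disjoint A B)
    (hpin : ∀ v ∈ A ∪ B, (G.neighborSet v).ncard ≤ 1)
    {x u : V} (hxu : G.Adj x u) (hxleaf : ∀ r, G.Adj x r → r = u)
    (huleaf : ∀ r, G.Adj u r → r = x) (hxA : x ∈ A) (huB : u ∈ B) :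
    Sys G A B (kappa G A B) := by
  classical
  set S : Set (Sym2 V) := {s(x, u)} with hS
  have hSmem : s(x, u) ∈ S := rfl
  have hSmem' : s(u, x) ∈ S := by rw [hS, Set.mem_singleton_iff]; exact Sym2.eq_swap
  have hxiso := leaf_isolated hxleaf hSmem
  have huiso := leaf_isolated huleaf hSmem'
  have hdis' : Disjoint (A \ {x}) (B \ {u}) :=
    Set.disjoint_of_subset Set.diff_subset Set.diff_subset hdis
  have hxne_u : x ≠ u := hxu.ne
  have hkle : kappa G A B ≤ kappa (G.deleteEdges S) (A \ {x}) (B \ {u}) + 1 := by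
    refine kappa_le_of_extend hdis' ?_
    rintro g' ⟨hg'A, hg'B⟩
    refine ⟨fun v => if v = x then false else if v = u then true else g' v, ⟨?_, ?_⟩, ?_⟩
    · intro a ha
      show (if a = x then false else if a = u then true else g' a) = false
      by_cases h : a = x
      · rw [if_pos h]
      · rw [if_neg h, if_neg (fun hh : a = u => Set.disjoint_left.mp hdis ha (hh ▸ huB))]
        exact hg'A a ⟨ha, h⟩
    · intro b hb
      show (if b = x then false else if b = u then true else g' b) = true
      rw [if_neg (fun hh : b = x => Set.disjoint_left.mp hdis (hh ▸ hxA) hb)]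
      by_cases h : b = u
      · rw [if_pos h]
      · rw [if_neg h]
        exact hg'B b ⟨hb, h⟩
    · rw [chSet_split G S]
      have hcongr : chSet (G.deleteEdges S)
            (fun v => if v = x then false else if v = u then true else g' v)
          = chSet (G.deleteEdges S) g' := by
        refine chSet_congr fun a b hab => ?_
        show (if a = x then false else if a = u then true else g' a) = g' a
        rw [if_neg (fun hh : a = x => hxiso b (by rw [← hh]; exact hab)),
          if_neg (fun hh : a = u => huiso b (by rw [← hh]; exact hab))]
      have hextra := extra_le_one (G := G) (S := S)
        (g := fun v => if v = x then false else if v = u then true else g' v)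
        (e0 := s(x, u)) (fun e he _ => he)
      rw [hcongr]
      omega
  have hsys' := IH _ (A \ {x}) (B \ {u}) (card_del_le hSmem ((mem_edgeSet G).mpr hxu) hcard)
    (acyclic_del hac S) (fun v => le_trans (nbhd_del_ncard G S v) (hdeg3 v)) hdis'
    (fun v hv => le_trans (nbhd_del_ncard G S v) (hpin v (by
      rcases hv with hv | hv
      · exact Or.inl hv.1
      · exact Or.inr hv.1)))
  have hAiso : ∀ v ∈ A, v ∉ A \ {x} → ∀ a, ¬ (G.deleteEdges S).Adj v a := by
    intro v hv hv' a
    have : v = x := by by_contra hne; exact hv' ⟨hv, hne⟩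
    exact this ▸ hxiso a
  have hBiso : ∀ v ∈ B, v ∉ B \ {u} → ∀ a, ¬ (G.deleteEdges S).Adj v a := by
    intro v hv hv' a
    have : v = u := by by_contra hne; exact hv' ⟨hv, hne⟩
    exact this ▸ huiso a
  obtain ⟨Q, hQdis, hQsub⟩ := sys_plain' (edgeSet_del_subset G S) Set.diff_subset
    Set.diff_subset hAiso hBiso hsys'
  have hN : ∃ N : ABPath G A B, N.walk.edges = [s(x, u)] := by
    refine ⟨⟨x, u, Walk.cons hxu Walk.nil, by simp [hxu.ne], hxA, huB, ?_⟩, by simp⟩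
    intro v hv
    simp at hv
  obtain ⟨N, hNe⟩ := hN
  have hfresh : s(x, u) ∉ (G.deleteEdges S).edgeSet := by
    rw [edgeSet_deleteEdges]
    exact fun h => h.2 hSmem
  have hdisN : ∀ i, N.walk.edges.Disjoint ((Q i).walk.edges) := by
    intro i e he1 he2
    rw [hNe, List.mem_singleton] at he1
    exact hfresh (he1 ▸ hQsub i e he2)
  exact sys_anti hkle (sys_cons N Q hQdis hdisN)

end Stmt13
namespace Stmt13

variable {V : Type*} [Finite V]

lemma reduce_R6 {G : SimpleGraph V} {A B : Set V} {n : ℕ} (IH : IndHyp V n)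
    (hcard : G.edgeSet.ncard ≤ n + 1) (hac : G.IsAcyclic)
    (hdeg3 : ∀ v, (G.neighborSet v).ncard ≤ 3) (hdis : Disjoint A B)
    (hpin : ∀ v ∈ A ∪ B, (G.neighborSet v).ncard ≤ 1)
    {x u : V} (hxu : G.Adj x u) (hxleaf : ∀ r, G.Adj x r → r = u)
    (hxA : x ∈ A) (hu2 : (G.neighborSet u).ncard ≤ 2) (huA : u ∉ A) (huB : u ∉ B) :
    Sys G A B (kappa G A B) := by
  classical
  set S : Set (Sym2 V) := {s(x, u)} with hS
  have hSmem : s(x, u) ∈ S := rfl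
  have hxiso := leaf_isolated hxleaf hSmem
  set A' : Set V := insert u (A \ {x}) with hA'
  have hdis' : Disjoint A' B := by
    rw [hA', Set.disjoint_left]
    rintro v (rfl | ⟨hv, -⟩)
    · exact huB
    · exact Set.disjoint_left.mp hdis hv
  have hxnbhd : x ∉ (G.deleteEdges S).neighborSet u := by
    rw [mem_neighborSet, deleteEdges_adj]
    rintro ⟨-, hne⟩
    exact hne (by rw [hS, Set.mem_singleton_iff]; exact Sym2.eq_swap)
  have hupin : ((G.deleteEdges S).neighborSet u).ncard ≤ 1 := by
    have hsub : insert x ((G.deleteEdges S).neighborSet u) ⊆ G.neighborSet u := by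
      rintro v (rfl | hv)
      · exact hxu.symm
      · exact nbhd_del_subset G S u hv
    have := Set.ncard_le_ncard hsub (Set.toFinite _)
    rw [Set.ncard_insert_of_notMem hxnbhd (Set.toFinite _)] at this
    omega
  have hudeg : ∀ a b, (G.deleteEdges S).Adj u a → (G.deleteEdges S).Adj u b → a = b := by
    intro a b ha hb
    exact (Set.ncard_le_one (Set.toFinite _)).mp hupin a ha b hb
  have hkle : kappa G A B ≤ kappa (G.deleteEdges S) A' B := by
    have := kappa_le_of_extend (G := G) (G' := G.deleteEdges S)
      (A := A) (B := B) (A' := A') (B' := B) (c := 0) hdis' ?_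
    · omega
    rintro g' ⟨hg'A, hg'B⟩
    refine ⟨fun v => if v = x then false else g' v, ⟨?_, ?_⟩, ?_⟩
    · intro a ha
      show (if a = x then false else g' a) = false
      by_cases h : a = x
      · rw [if_pos h]
      · rw [if_neg h]
        exact hg'A a (Or.inr ⟨ha, h⟩)
    · intro b hb
      show (if b = x then false else g' b) = true
      rw [if_neg (fun hh : b = x => Set.disjoint_left.mp hdis (hh ▸ hxA) hb)]
      exact hg'B b hb
    · rw [chSet_split G S]
      have hcongr : chSet (G.deleteEdges S) (fun v => if v = x then false else g' v)
          = chSet (G.deleteEdges S) g' := by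
        refine chSet_congr fun a b hab => ?_
        show (if a = x then false else g' a) = g' a
        rw [if_neg (fun hh : a = x => hxiso b (by rw [← hh]; exact hab))]
      have hextra := extra_zero_of_diag
        (G := G) (S := S) (g := fun v => if v = x then false else g' v) ?_
      · rw [hcongr, hextra]
      intro e he
      rw [hS, Set.mem_singleton_iff] at he
      subst he
      rw [Sym2.map_pair_eq, Sym2.mk_isDiag_iff]
      rw [if_pos rfl, if_neg hxu.ne']
      exact (hg'A u (Or.inl rfl)).symm
  have hsys' := IH _ A' B (card_del_le hSmem ((mem_edgeSet G).mpr hxu) hcard)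
    (acyclic_del hac S) (fun v => le_trans (nbhd_del_ncard G S v) (hdeg3 v)) hdis'
    (fun v hv => ?_)
  · refine sys_anti hkle (sys_prepend (edgeSet_del_subset G S) hxu ?_ hxA huA huB hxiso ?_ ?_
      hudeg hsys')
    · rw [edgeSet_deleteEdges]
      exact fun h => h.2 hSmem
    · rintro v hv hvu
      rw [hA', Set.mem_insert_iff] at hv
      rcases hv with rfl | hv
      · exact absurd rfl hvu
      · exact hv.1
    · intro v hv hv' a
      have : v = x := by
        by_contra hne
        exact hv' (Or.inr ⟨hv, hne⟩)
      exact this ▸ hxiso a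
  · rcases hv with hv | hv
    · rw [hA', Set.mem_insert_iff] at hv
      rcases hv with rfl | hv
      · exact hupin
      · exact le_trans (nbhd_del_ncard G S v) (hpin v (Or.inl hv.1))
    · exact le_trans (nbhd_del_ncard G S v) (hpin v (Or.inr hv))

end Stmt13
namespace Stmt13

variable {V : Type*} [Finite V]

lemma reduce_R4 {G : SimpleGraph V} {A B : Set V} {n : ℕ} (IH : IndHyp V n)
    (hcard : G.edgeSet.ncard ≤ n + 1) (hac : G.IsAcyclic)
    (hdeg3 : ∀ v, (G.neighborSet v).ncard ≤ 3) (hdis : Disjoint A B)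
    (hpin : ∀ v ∈ A ∪ B, (G.neighborSet v).ncard ≤ 1)
    {x y u : V} (hxu : G.Adj x u) (hyu : G.Adj y u) (hxy : x ≠ y)
    (hxleaf : ∀ r, G.Adj x r → r = u) (hyleaf : ∀ r, G.Adj y r → r = u)
    (hxA : x ∈ A) (hyA : y ∈ A) (huA : u ∉ A) (huB : u ∉ B) :
    Sys G A B (kappa G A B) := by
  classical
  set S : Set (Sym2 V) := {s(x, u), s(y, u)} with hS
  have hSmem : s(x, u) ∈ S := by rw [hS]; exact Set.mem_insert _ _
  have hSmem2 : s(y, u) ∈ S := by rw [hS]; exact Set.mem_insert_iff.mpr (Or.inr rfl)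
  have hxiso := leaf_isolated hxleaf hSmem
  have hyiso := leaf_isolated hyleaf hSmem2
  set A' : Set V := insert u (A \ {x, y}) with hA'
  have hdis' : Disjoint A' B := by
    rw [hA', Set.disjoint_left]
    rintro v (rfl | ⟨hv, -⟩)
    · exact huB
    · exact Set.disjoint_left.mp hdis hv
  have hxnbhd : x ∉ (G.deleteEdges S).neighborSet u := by
    rw [mem_neighborSet, deleteEdges_adj]
    rintro ⟨-, hne⟩
    exact hne (by rw [hS]; exact Set.mem_insert_iff.mpr (Or.inl Sym2.eq_swap))
  have hynbhd : y ∉ (G.deleteEdges S).neighborSet u := by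
    rw [mem_neighborSet, deleteEdges_adj]
    rintro ⟨-, hne⟩
    refine hne ?_
    rw [hS, Set.mem_insert_iff, Set.mem_singleton_iff]
    right
    exact Sym2.eq_swap
  have hupin : ((G.deleteEdges S).neighborSet u).ncard ≤ 1 := by
    have hsub : insert x (insert y ((G.deleteEdges S).neighborSet u)) ⊆ G.neighborSet u := by
      rintro v (rfl | rfl | hv)
      · exact hxu.symm
      · exact hyu.symm
      · exact nbhd_del_subset G S u hv
    have h1 := Set.ncard_le_ncard hsub (Set.toFinite _)
    rw [Set.ncard_insert_of_notMem (fun h => ?notx) (Set.toFinite _),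
      Set.ncard_insert_of_notMem hynbhd (Set.toFinite _)] at h1
    case notx =>
      rcases h with rfl | h
      · exact hxy rfl
      · exact hxnbhd h
    have := hdeg3 u
    omega
  have hudeg : ∀ a b, (G.deleteEdges S).Adj u a → (G.deleteEdges S).Adj u b → a = b := by
    intro a b ha hb
    exact (Set.ncard_le_one (Set.toFinite _)).mp hupin a ha b hb
  have hkle : kappa G A B ≤ kappa (G.deleteEdges S) A' B := by
    have := kappa_le_of_extend (G := G) (G' := G.deleteEdges S)
      (A := A) (B := B) (A' := A') (B' := B) (c := 0) hdis' ?_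
    · omega
    rintro g' ⟨hg'A, hg'B⟩
    refine ⟨fun v => if v = x ∨ v = y then false else g' v, ⟨?_, ?_⟩, ?_⟩
    · intro a ha
      show (if a = x ∨ a = y then false else g' a) = false
      by_cases h : a = x ∨ a = y
      · rw [if_pos h]
      · rw [if_neg h]
        exact hg'A a (Or.inr ⟨ha, fun hh => h (by simpa using hh)⟩)
    · intro b hb
      show (if b = x ∨ b = y then false else g' b) = true
      rw [if_neg ?_]
      · exact hg'B b hb
      rintro (rfl | rfl)
      · exact Set.disjoint_left.mp hdis hxA hb
      · exact Set.disjoint_left.mp hdis hyA hb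
    · rw [chSet_split G S]
      have hcongr : chSet (G.deleteEdges S) (fun v => if v = x ∨ v = y then false else g' v)
          = chSet (G.deleteEdges S) g' := by
        refine chSet_congr fun a b hab => ?_
        show (if a = x ∨ a = y then false else g' a) = g' a
        rw [if_neg ?_]
        rintro (rfl | rfl)
        · exact hxiso b hab
        · exact hyiso b hab
      have hgu : (if u = x ∨ u = y then false else g' u) = false := by
        by_cases h : u = x ∨ u = y
        · rw [if_pos h]
        · rw [if_neg h]
          exact hg'A u (Or.inl rfl)
      have hextra := extra_zero_of_diag
        (G := G) (S := S) (g := fun v => if v = x ∨ v = y then false else g' v) ?_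
      · rw [hcongr, hextra]
      intro e he
      rw [hS] at he
      rcases he with rfl | he
      · rw [Sym2.map_pair_eq, Sym2.mk_isDiag_iff, if_pos (Or.inl rfl), hgu]
      · rw [Set.mem_singleton_iff] at he
        subst he
        rw [Sym2.map_pair_eq, Sym2.mk_isDiag_iff, if_pos (Or.inr rfl), hgu]
  have hsys' := IH _ A' B (card_del_le hSmem ((mem_edgeSet G).mpr hxu) hcard)
    (acyclic_del hac S) (fun v => le_trans (nbhd_del_ncard G S v) (hdeg3 v)) hdis'
    (fun v hv => ?_)
  · refine sys_anti hkle (sys_prepend (edgeSet_del_subset G S) hxu ?_ hxA huA huB hxiso ?_ ?_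
      hudeg hsys')
    · rw [edgeSet_deleteEdges]
      exact fun h => h.2 hSmem
    · rintro v hv hvu
      rw [hA', Set.mem_insert_iff] at hv
      rcases hv with rfl | hv
      · exact absurd rfl hvu
      · exact hv.1
    · intro v hv hv' a hadj
      have hv2 : v = x ∨ v = y := by
        by_contra hne
        push_neg at hne
        exact hv' (Or.inr ⟨hv, by simpa using hne⟩)
      rcases hv2 with rfl | rfl
      · exact hxiso a hadj
      · exact hyiso a hadj
  · rcases hv with hv | hv
    · rw [hA', Set.mem_insert_iff] at hv
      rcases hv with rfl | hv
      · exact hupin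
      · exact le_trans (nbhd_del_ncard G S v) (hpin v (Or.inl hv.1))
    · exact le_trans (nbhd_del_ncard G S v) (hpin v (Or.inr hv))

end Stmt13
namespace Stmt13

variable {V : Type*} [Finite V]

lemma reduce_R3 {G : SimpleGraph V} {A B : Set V} {n : ℕ} (IH : IndHyp V n)
    (hcard : G.edgeSet.ncard ≤ n + 1) (hac : G.IsAcyclic)
    (hdeg3 : ∀ v, (G.neighborSet v).ncard ≤ 3) (hdis : Disjoint A B)
    (hpin : ∀ v ∈ A ∪ B, (G.neighborSet v).ncard ≤ 1)
    {x y u : V} (hxu : G.Adj x u) (hyu : G.Adj y u) (hxy : x ≠ y)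
    (hxleaf : ∀ r, G.Adj x r → r = u) (hyleaf : ∀ r, G.Adj y r → r = u)
    (hxA : x ∈ A) (hyB : y ∈ B) (huA : u ∉ A) (huB : u ∉ B) :
    Sys G A B (kappa G A B) := by
  classical
  set S : Set (Sym2 V) := {s(x, u), s(y, u)} with hS
  have hSmem : s(x, u) ∈ S := by rw [hS]; exact Set.mem_insert _ _
  have hSmem2 : s(y, u) ∈ S := by rw [hS]; exact Set.mem_insert_iff.mpr (Or.inr rfl)
  have hxiso := leaf_isolated hxleaf hSmem
  have hyiso := leaf_isolated hyleaf hSmem2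
  have hdis' : Disjoint (A \ {x}) (B \ {y}) :=
    Set.disjoint_of_subset Set.diff_subset Set.diff_subset hdis
  have hkle : kappa G A B ≤ kappa (G.deleteEdges S) (A \ {x}) (B \ {y}) + 1 := by
    refine kappa_le_of_extend hdis' ?_
    rintro g' ⟨hg'A, hg'B⟩
    refine ⟨fun v => if v = x then false else if v = y then true else g' v, ⟨?_, ?_⟩, ?_⟩
    · intro a ha
      show (if a = x then false else if a = y then true else g' a) = false
      by_cases h : a = x
      · rw [if_pos h]
      · rw [if_neg h, if_neg (fun hh : a = y => Set.disjoint_left.mp hdis ha (hh ▸ hyB))]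
        exact hg'A a ⟨ha, h⟩
    · intro b hb
      show (if b = x then false else if b = y then true else g' b) = true
      rw [if_neg (fun hh : b = x => Set.disjoint_left.mp hdis (hh ▸ hxA) hb)]
      by_cases h : b = y
      · rw [if_pos h]
      · rw [if_neg h]
        exact hg'B b ⟨hb, h⟩
    · rw [chSet_split G S]
      have hcongr : chSet (G.deleteEdges S)
            (fun v => if v = x then false else if v = y then true else g' v)
          = chSet (G.deleteEdges S) g' := by
        refine chSet_congr fun a b hab => ?_
        show (if a = x then false else if a = y then true else g' a) = g' a
        rw [if_neg (fun hh : a = x => hxiso b (by rw [← hh]; exact hab)),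
          if_neg (fun hh : a = y => hyiso b (by rw [← hh]; exact hab))]
      have hgu : (if u = x then false else if u = y then true else g' u) = g' u := by
        rw [if_neg hxu.ne', if_neg hyu.ne']
      rw [hcongr]
      by_cases hgu' : g' u = false
      · have hextra := extra_le_one (G := G) (S := S)
          (g := fun v => if v = x then false else if v = y then true else g' v)
          (e0 := s(y, u)) ?_
        · omega
        intro e he hch
        rw [hS] at he
        rcases he with rfl | he
        · exfalso
          refine hch ?_
          rw [Sym2.map_pair_eq, Sym2.mk_isDiag_iff, if_pos rfl, hgu, hgu']
        · rw [Set.mem_singleton_iff] at he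
          exact he
      · have hextra := extra_le_one (G := G) (S := S)
          (g := fun v => if v = x then false else if v = y then true else g' v)
          (e0 := s(x, u)) ?_
        · omega
        intro e he hch
        rw [hS] at he
        rcases he with rfl | he
        · rfl
        · rw [Set.mem_singleton_iff] at he
          subst he
          exfalso
          refine hch ?_
          rw [Sym2.map_pair_eq, Sym2.mk_isDiag_iff,
            if_neg (fun h : y = x => hxy h.symm), if_pos rfl, hgu]
          simp only [Bool.not_eq_false] at hgu'
          exact hgu'.symm
  have hsys' := IH _ (A \ {x}) (B \ {y}) (card_del_le hSmem ((mem_edgeSet G).mpr hxu) hcard)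
    (acyclic_del hac S) (fun v => le_trans (nbhd_del_ncard G S v) (hdeg3 v)) hdis'
    (fun v hv => le_trans (nbhd_del_ncard G S v) (hpin v (by
      rcases hv with hv | hv
      · exact Or.inl hv.1
      · exact Or.inr hv.1)))
  have hAiso : ∀ v ∈ A, v ∉ A \ {x} → ∀ a, ¬ (G.deleteEdges S).Adj v a := by
    intro v hv hv' a
    have : v = x := by by_contra hne; exact hv' ⟨hv, hne⟩
    exact this ▸ hxiso a
  have hBiso : ∀ v ∈ B, v ∉ B \ {y} → ∀ a, ¬ (G.deleteEdges S).Adj v a := by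
    intro v hv hv' a
    have : v = y := by by_contra hne; exact hv' ⟨hv, hne⟩
    exact this ▸ hyiso a
  obtain ⟨Q, hQdis, hQsub⟩ := sys_plain' (edgeSet_del_subset G S) Set.diff_subset
    Set.diff_subset hAiso hBiso hsys'
  have hN : ∃ N : ABPath G A B, N.walk.edges = [s(x, u), s(u, y)] := by
    refine ⟨⟨x, y, Walk.cons hxu (Walk.cons hyu.symm Walk.nil), ?_, hxA, hyB, ?_⟩, by simp⟩
    · rw [Walk.cons_isPath_iff]
      constructor
      · rw [Walk.cons_isPath_iff]
        exact ⟨by simp, by simp [hyu.ne']⟩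
      · simp [hxu.ne, hxy]
    · intro v hv
      simp only [Walk.support_cons, Walk.support_nil, List.tail_cons] at hv
      have : v = u := by simpa using hv
      subst this
      exact ⟨huA, huB⟩
  obtain ⟨N, hNe⟩ := hN
  have hfresh : ∀ e ∈ N.walk.edges, e ∉ (G.deleteEdges S).edgeSet := by
    intro e he
    rw [hNe] at he
    rw [edgeSet_deleteEdges]
    rw [List.mem_cons, List.mem_singleton] at he
    rcases he with rfl | rfl
    · exact fun h => h.2 hSmem
    · exact fun h => h.2 (by rw [Sym2.eq_swap]; exact hSmem2)
  have hdisN : ∀ i, N.walk.edges.Disjoint ((Q i).walk.edges) := fun i e he1 he2 =>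
    hfresh e he1 (hQsub i e he2)
  exact sys_anti hkle (sys_cons N Q hQdis hdisN)

end Stmt13
namespace Stmt13

variable {V : Type*} [Finite V]

lemma step_main {G : SimpleGraph V} {A B : Set V} {n : ℕ} (IH : IndHyp V n)
    (hcard : G.edgeSet.ncard ≤ n + 1) (hac : G.IsAcyclic)
    (hdeg3 : ∀ v, (G.neighborSet v).ncard ≤ 3) (hdis : Disjoint A B)
    (hpin : ∀ v ∈ A ∪ B, (G.neighborSet v).ncard ≤ 1)
    {x u z : V} (hxu : G.Adj x u) (M' : G.Walk u z)
    (hM : (Walk.cons hxu M').IsPath)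
    (hmax : ∀ (c' d' : V) (W : G.Walk c' d'), W.IsPath → W.length ≤ (Walk.cons hxu M').length)
    (hxleaf : ∀ r, G.Adj x r → r = u) (hxA : x ∈ A) :
    Sys G A B (kappa G A B) := by
  classical
  by_cases hu1 : (G.neighborSet u).ncard ≤ 1
  · have huleaf : ∀ r, G.Adj u r → r = x := by
      intro r hr
      exact (Set.ncard_le_one (Set.toFinite _)).mp hu1 r hr x hxu.symm
    by_cases huB : u ∈ B
    · exact reduce_R1 IH hcard hac hdeg3 hdis hpin hxu hxleaf huleaf hxA huB
    · exact reduce_R7 IH hcard hac hdeg3 hdis hpin hxu hxleaf huleaf hxA huB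
  · have huA : u ∉ A := fun h => hu1 (hpin u (Or.inl h))
    have huB : u ∉ B := fun h => hu1 (hpin u (Or.inr h))
    by_cases hu2 : (G.neighborSet u).ncard ≤ 2
    · exact reduce_R6 IH hcard hac hdeg3 hdis hpin hxu hxleaf hxA hu2 huA huB
    · -- deg u = 3 : find second path vertex t
      have huz : u ≠ z := by
        rintro rfl
        have hM'nil : M' = Walk.nil := Walk.isPath_iff_eq_nil.mp hM.of_cons
        obtain ⟨t, htmem, htx⟩ := Set.not_subset.mp
          (fun hsub : G.neighborSet u ⊆ {x} => hu1
            (le_trans (Set.ncard_le_ncard hsub (Set.toFinite _)) (by simp)))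
        rw [mem_neighborSet] at htmem
        rw [Set.mem_singleton_iff] at htx
        have hpath : (Walk.cons hxu (Walk.cons htmem Walk.nil)).IsPath := by
          rw [Walk.cons_isPath_iff]
          constructor
          · rw [Walk.cons_isPath_iff]
            exact ⟨by simp, by simp [htmem.ne]⟩
          · simp only [Walk.support_cons, Walk.support_nil, List.mem_cons]
            push_neg
            exact ⟨hxu.ne, fun h => htx h.symm, by simp⟩
        have := hmax _ _ _ hpath
        subst hM'nil
        simp at this
      obtain ⟨t, hut, M'', rfl⟩ := Walk.exists_eq_cons_of_ne huz M'
      obtain ⟨s0, hs0mem, hs0⟩ := Set.not_subset.mp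
        (fun hsub : G.neighborSet u ⊆ {x, t} => hu2
          (le_trans (Set.ncard_le_ncard hsub (Set.toFinite _))
            (le_trans (Set.ncard_insert_le x {t}) (by simp))))
      rw [mem_neighborSet] at hs0mem
      simp only [Set.mem_insert_iff, Set.mem_singleton_iff, not_or] at hs0
      obtain ⟨hs0x, hs0t⟩ := hs0
      have hus : G.Adj s0 u := hs0mem.symm
      have hsnot : s0 ∉ (Walk.cons hut M'').support :=
        not_mem_support_of_adj hac hut M'' hM.of_cons hs0mem hs0t
      have hW1path : (Walk.cons hus (Walk.cons hut M'')).IsPath := by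
        rw [Walk.cons_isPath_iff]
        exact ⟨hM.of_cons, hsnot⟩
      have hsleaf : ∀ r, G.Adj s0 r → r = u := by
        intro r hr
        by_contra hru
        have hnot : r ∉ (Walk.cons hus (Walk.cons hut M'')).support :=
          not_mem_support_of_adj hac hus (Walk.cons hut M'') hW1path hr hru
        have hlong : (Walk.cons hr.symm (Walk.cons hus (Walk.cons hut M''))).IsPath := by
          rw [Walk.cons_isPath_iff]
          exact ⟨hW1path, hnot⟩
        have := hmax _ _ _ hlong
        simp only [Walk.length_cons] at this
        omega
      by_cases hsA : s0 ∈ A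
      · exact reduce_R4 IH hcard hac hdeg3 hdis hpin hxu hus (fun h => hs0x h.symm)
          hxleaf hsleaf hxA hsA huA huB
      · by_cases hsB : s0 ∈ B
        · exact reduce_R3 IH hcard hac hdeg3 hdis hpin hxu hus (fun h => hs0x h.symm)
            hxleaf hsleaf hxA hsB huA huB
        · exact reduce_unpinned IH hcard hac hdeg3 hdis hpin hus hsleaf
            (fun h => h.elim hsA hsB)

theorem hard (n : ℕ) : IndHyp V n := by
  induction n with
  | zero =>
    intro G A B hcard hac hdeg3 hdis hpin
    have hE : G.edgeSet = ∅ := by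
      rw [← Set.ncard_eq_zero (Set.toFinite _)]
      omega
    have hsep : ∀ a ∈ A, ∀ b ∈ B, ¬ G.Reachable a b := by
      intro a ha b hb hr
      have hab : a ≠ b := fun h => Set.disjoint_left.mp hdis ha (h ▸ hb)
      obtain ⟨w⟩ := hr
      obtain ⟨cc, hadj, -, -⟩ := Walk.exists_eq_cons_of_ne hab w
      have hmem : s(a, cc) ∈ G.edgeSet := (mem_edgeSet G).mpr hadj
      rw [hE] at hmem
      exact hmem
    rw [kappa_zero_of_separated hsep]
    exact sys_zero G A B
  | succ n IH =>
    intro G A B hcard hac hdeg3 hdis hpin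
    classical
    by_cases hsep : ∀ a ∈ A, ∀ b ∈ B, ¬ G.Reachable a b
    · rw [kappa_zero_of_separated hsep]
      exact sys_zero G A B
    push_neg at hsep
    obtain ⟨a, ha, b, hb, hreach⟩ := hsep
    have hab : a ≠ b := fun h => Set.disjoint_left.mp hdis ha (h ▸ hb)
    obtain ⟨w⟩ := hreach
    obtain ⟨c0, hadj, -, -⟩ := Walk.exists_eq_cons_of_ne hab w
    -- longest path
    have hfin : Fintype V := Fintype.ofFinite V
    have hne : Set.Nonempty {k : ℕ | ∃ (c d : V) (W : G.Walk c d), W.IsPath ∧ W.length = k} :=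
      ⟨1, a, c0, Walk.cons hadj Walk.nil, by simp [hadj.ne], by simp⟩
    have hbdd : BddAbove {k : ℕ | ∃ (c d : V) (W : G.Walk c d), W.IsPath ∧ W.length = k} := by
      refine ⟨Fintype.card V, ?_⟩
      rintro k ⟨c, d, W, hW, rfl⟩
      exact le_of_lt hW.length_lt
    obtain ⟨c, d, M, hM, hMlen⟩ := Nat.sSup_mem hne hbdd
    have hmax : ∀ (c' d' : V) (W : G.Walk c' d'), W.IsPath → W.length ≤ M.length := by
      intro c' d' W hW
      rw [hMlen]
      exact le_csSup hbdd ⟨c', d', W, hW, rfl⟩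
    have h1 : 1 ≤ M.length := by
      rw [hMlen]
      refine le_csSup hbdd ⟨a, c0, Walk.cons hadj Walk.nil, by simp [hadj.ne], by simp⟩
    have hcd : c ≠ d := by
      rintro rfl
      rw [Walk.isPath_iff_eq_nil.mp hM] at h1
      simp at h1
    obtain ⟨u, hcu, M', rfl⟩ := Walk.exists_eq_cons_of_ne hcd M
    have hxleaf : ∀ r, G.Adj c r → r = u := by
      intro r hr
      by_contra hru
      have hnot : r ∉ (Walk.cons hcu M').support :=
        not_mem_support_of_adj hac hcu M' hM hr hru
      have hlong : (Walk.cons hr.symm (Walk.cons hcu M')).IsPath := by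
        rw [Walk.cons_isPath_iff]
        exact ⟨hM, hnot⟩
      have := hmax _ _ _ hlong
      simp only [Walk.length_cons] at this
      omega
    by_cases hcA : c ∈ A
    · exact step_main IH hcard hac hdeg3 hdis hpin hcu M' hM hmax hxleaf hcA
    by_cases hcB : c ∈ B
    · have hpin' : ∀ v ∈ B ∪ A, (G.neighborSet v).ncard ≤ 1 := by
        intro v hv
        exact hpin v (by rwa [Set.union_comm])
      have hstep := step_main IH hcard hac hdeg3 hdis.symm hpin' hcu M' hM hmax hxleaf hcB
      rw [kappa_comm]
      exact sys_rev hstep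
    · exact reduce_unpinned IH hcard hac hdeg3 hdis hpin hcu hxleaf
        (fun h => h.elim hcA hcB)

end Stmt13
/-- the parsimony score `l(f,T)` equals the maximum number of
edge-disjoint `A_f`-`B_f`-paths in `T`. -/
theorem stmt_13 {X : Type*} [Fintype X] (T : PhyloTree X) (f : X → Bool) :
    IsGreatest
      {m : ℕ | ∃ P : Fin m →
          ABPath T.G (T.leaf '' {x | f x = false}) (T.leaf '' {x | f x = true}),
        ∀ i j, i ≠ j → (P i).walk.edges.Disjoint (P j).walk.edges}
      (T.parsimony f) := by
  classical
  letI : Fintype T.V := T.fintypeV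
  set A : Set T.V := T.leaf '' {x | f x = false} with hA
  set B : Set T.V := T.leaf '' {x | f x = true} with hB
  have hdis : Disjoint A B := by
    rw [Set.disjoint_left]
    rintro v ⟨x1, hx1, rfl⟩ ⟨x2, hx2, hx⟩
    have hxeq : x2 = x1 := T.leaf_inj hx
    rw [hxeq] at hx2
    rw [Set.mem_setOf_eq] at hx1 hx2
    rw [hx1] at hx2
    exact Bool.false_ne_true hx2
  have hdeg3 : ∀ v, (T.G.neighborSet v).ncard ≤ 3 := by
    intro v
    rcases T.binary v with h | h <;> omega
  have hpin : ∀ v ∈ A ∪ B, (T.G.neighborSet v).ncard ≤ 1 := by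
    rintro v (⟨x, -, rfl⟩ | ⟨x, -, rfl⟩) <;> exact (T.leaf_iff _).mpr ⟨x, rfl⟩
  have hpins : ∀ g : T.V → Bool, (∀ x, g (T.leaf x) = f x) ↔ Stmt13.Pins A B g := by
    intro g
    constructor
    · intro hg
      constructor
      · rintro a ⟨x, hx, rfl⟩
        rw [hg x, Set.mem_setOf_eq] at *
        exact hx
      · rintro b ⟨x, hx, rfl⟩
        rw [hg x]
        exact hx
    · intro hg x
      cases hfx : f x with
      | false => exact hg.1 _ ⟨x, hfx, rfl⟩
      | true => exact hg.2 _ ⟨x, hfx, rfl⟩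
  have hkp : T.parsimony f = Stmt13.kappa T.G A B := by
    unfold PhyloTree.parsimony Stmt13.kappa
    congr 1
    ext n
    constructor
    · rintro ⟨g, hg, hcn⟩
      exact ⟨g, (hpins g).mp hg, hcn⟩
    · rintro ⟨g, hg, hcn⟩
      exact ⟨g, (hpins g).mpr hg, hcn⟩
  constructor
  · obtain ⟨P, hP⟩ := Stmt13.hard T.G.edgeSet.ncard T.G A B le_rfl T.isTree.IsAcyclic
      hdeg3 hdis hpin
    rw [Set.mem_setOf_eq, hkp]
    exact ⟨P, hP⟩
  · rintro m ⟨P, hP⟩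
    rw [hkp]
    exact Stmt13.sys_le_kappa hdis ⟨P, hP⟩
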